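/- Let ρ₀, ρ₁ be density matrices with ‖ρ₀−ρ₁‖₁ ≥ t, and let P be a projection of rank D with tr(ρᵢP) ≥ 1 − c² for i = 0,1, where t = 4c + r, r > 0. Then ‖ρ₀ − ρ₁‖₂² ≥ r²/D. -/

import Mathlib

open Matrix
open scoped ComplexOrder

/-- A density matrix: positive semidefinite with unit trace. -/
def IsDensityMatrix {n : ℕ} (ρ : Matrix (Fin n) (Fin n) ℂ) : Prop :=
  ρ.PosSemidef ∧ ρ.trace = 1
noncomputable def Matrix.PosSemidef.sqrt {n 𝕜 : Type*} [Fintype n] [DecidableEq n] [RCLike 𝕜]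
    {A : Matrix n n 𝕜} (hA : A.PosSemidef) : Matrix n n 𝕜 :=
  hA.1.eigenvectorUnitary.1 * diagonal ((↑) ∘ (√·) ∘ hA.1.eigenvalues) *
  (star hA.1.eigenvectorUnitary : Matrix n n 𝕜)

open scoped MatrixOrder in
lemma Matrix.PosSemidef.sqrt_eq_cfcSqrt {m : Type*} [Fintype m] [DecidableEq m]
    {A : Matrix m m ℂ} (hA : A.PosSemidef) : hA.sqrt = CFC.sqrt A := by
  rw [CFC.sqrt_eq_real_sqrt A hA.nonneg, cfcₙ_eq_cfc, hA.1.cfc_eq, IsHermitian.cfc,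
    Unitary.conjStarAlgAut_apply]
  rfl

open scoped MatrixOrder in
lemma Matrix.PosSemidef.sqrt_mul_self {m : Type*} [Fintype m] [DecidableEq m]
    {A : Matrix m m ℂ} (hA : A.PosSemidef) : hA.sqrt * hA.sqrt = A := by
  rw [hA.sqrt_eq_cfcSqrt]; exact CFC.sqrt_mul_sqrt_self A hA.nonneg

open scoped MatrixOrder in
lemma Matrix.PosSemidef.posSemidef_sqrt {m : Type*} [Fintype m] [DecidableEq m]
    {A : Matrix m m ℂ} (hA : A.PosSemidef) : hA.sqrt.PosSemidef := by
  rw [hA.sqrt_eq_cfcSqrt]; exact (CFC.sqrt_nonneg A).posSemidef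

open scoped MatrixOrder in
lemma Matrix.PosSemidef.eq_sqrt_of_sq_eq {m : Type*} [Fintype m] [DecidableEq m]
    {A : Matrix m m ℂ} (hA : A.PosSemidef) {B : Matrix m m ℂ} (hB : B.PosSemidef)
    (hAB : A ^ 2 = B) : A = hB.sqrt := by
  rw [hB.sqrt_eq_cfcSqrt]
  exact (CFC.sqrt_unique (by rw [← hAB, pow_two]) hA.nonneg).symm

/-- The trace norm of a (square complex) matrix: `tr √(AᴴA)`. -/
noncomputable def traceNorm {n : ℕ} (A : Matrix (Fin n) (Fin n) ℂ) : ℝ :=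
  ((Matrix.posSemidef_conjTranspose_mul_self A).sqrt).trace.re

section Helpers

variable {n : ℕ}

lemma trace_conj_mul_self_re (X : Matrix (Fin n) (Fin n) ℂ) :
    (Xᴴ * X).trace.re = ∑ i, ∑ j, Complex.normSq (X j i) := by
  simp only [Matrix.trace, Matrix.diag, Matrix.mul_apply, Matrix.conjTranspose_apply]
  rw [Complex.re_sum]
  refine Finset.sum_congr rfl fun i _ => ?_
  rw [Complex.re_sum]
  refine Finset.sum_congr rfl fun j _ => ?_
  have : star (X j i) * X j i = (Complex.normSq (X j i) : ℂ) := by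
    rw [Complex.normSq_eq_conj_mul_self]; rfl
  rw [this, Complex.ofReal_re]

lemma trace_re_nonneg {M : Matrix (Fin n) (Fin n) ℂ} (h : M.PosSemidef) : 0 ≤ M.trace.re := by
  exact (Complex.nonneg_iff.mp h.trace_nonneg).1

lemma abs_trace_mul_re_le (X Y : Matrix (Fin n) (Fin n) ℂ) :
    |((X * Y).trace).re| ≤ Real.sqrt ((Xᴴ * X).trace.re) * Real.sqrt ((Yᴴ * Y).trace.re) := by
  have h1 : |((X * Y).trace).re| ≤ ∑ p : Fin n × Fin n, ‖X p.1 p.2‖ * ‖Y p.2 p.1‖ := by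
    calc |((X * Y).trace).re| ≤ ‖(X * Y).trace‖ := Complex.abs_re_le_norm _
      _ = ‖∑ p : Fin n × Fin n, X p.1 p.2 * Y p.2 p.1‖ := by
          rw [Matrix.trace]
          congr 1
          rw [Fintype.sum_prod_type]
          exact Finset.sum_congr rfl fun i _ => by simp [Matrix.mul_apply, Matrix.diag]
      _ ≤ ∑ p : Fin n × Fin n, ‖X p.1 p.2 * Y p.2 p.1‖ := norm_sum_le _ _
      _ = ∑ p : Fin n × Fin n, ‖X p.1 p.2‖ * ‖Y p.2 p.1‖ := by simp [norm_mul]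
  have h2 : (∑ p : Fin n × Fin n, ‖X p.1 p.2‖ * ‖Y p.2 p.1‖) ^ 2 ≤
      ((Xᴴ * X).trace.re) * ((Yᴴ * Y).trace.re) := by
    have := Finset.sum_mul_sq_le_sq_mul_sq Finset.univ
      (fun p : Fin n × Fin n => ‖X p.1 p.2‖) (fun p : Fin n × Fin n => ‖Y p.2 p.1‖)
    have eX : (∑ p : Fin n × Fin n, ‖X p.1 p.2‖ ^ 2) = (Xᴴ * X).trace.re := by
      rw [trace_conj_mul_self_re, Fintype.sum_prod_type, Finset.sum_comm]
      refine Finset.sum_congr rfl fun i _ => Finset.sum_congr rfl fun j _ => ?_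
      simp [Complex.normSq_eq_norm_sq]
    have eY : (∑ p : Fin n × Fin n, ‖Y p.2 p.1‖ ^ 2) = (Yᴴ * Y).trace.re := by
      rw [trace_conj_mul_self_re, Fintype.sum_prod_type]
      refine Finset.sum_congr rfl fun i _ => Finset.sum_congr rfl fun j _ => ?_
      simp [Complex.normSq_eq_norm_sq]
    rw [← eX, ← eY]; exact this
  calc |((X * Y).trace).re| ≤ ∑ p : Fin n × Fin n, ‖X p.1 p.2‖ * ‖Y p.2 p.1‖ := h1
    _ ≤ Real.sqrt (((Xᴴ * X).trace.re) * ((Yᴴ * Y).trace.re)) := by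
        rw [show (∑ p : Fin n × Fin n, ‖X p.1 p.2‖ * ‖Y p.2 p.1‖) =
          Real.sqrt ((∑ p : Fin n × Fin n, ‖X p.1 p.2‖ * ‖Y p.2 p.1‖)^2) from
          (Real.sqrt_sq (by positivity)).symm]
        exact Real.sqrt_le_sqrt h2
    _ = _ := Real.sqrt_mul (by
          rw [trace_conj_mul_self_re]
          exact Finset.sum_nonneg fun i _ => Finset.sum_nonneg fun j _ => Complex.normSq_nonneg _) _

lemma unitary_conj_mul (U : Matrix (Fin n) (Fin n) ℂ) (hU2 : star U * U = 1)
    (d d' : Fin n → ℂ) :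
    (U * diagonal d * star U) * (U * diagonal d' * star U)
      = U * diagonal (fun i => d i * d' i) * star U := by
  have h : star U * (U * diagonal d' * star U) = diagonal d' * star U := by
    rw [← Matrix.mul_assoc, ← Matrix.mul_assoc, hU2, Matrix.one_mul]
  calc (U * diagonal d * star U) * (U * diagonal d' * star U)
      = U * diagonal d * (star U * (U * diagonal d' * star U)) := by
        rw [Matrix.mul_assoc]
    _ = U * diagonal d * (diagonal d' * star U) := by rw [h]
    _ = U * (diagonal d * diagonal d') * star U := by
        rw [Matrix.mul_assoc, Matrix.mul_assoc, Matrix.mul_assoc]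
    _ = _ := by rw [Matrix.diagonal_mul_diagonal]

lemma unitary_conj_inj (U : Matrix (Fin n) (Fin n) ℂ)
    (hU2 : star U * U = 1) {A B : Matrix (Fin n) (Fin n) ℂ}
    (h : U * A * star U = U * B * star U) : A = B := by
  have key : ∀ C : Matrix (Fin n) (Fin n) ℂ, star U * (U * C * star U) * U = C := by
    intro C
    simp only [← Matrix.mul_assoc, hU2, Matrix.one_mul]
    rw [Matrix.mul_assoc, hU2, Matrix.mul_one]
  rw [← key A, h, key B]

lemma trace_unitary_conj (U : Matrix (Fin n) (Fin n) ℂ) (hU2 : star U * U = 1)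
    (d : Fin n → ℂ) : (U * diagonal d * star U).trace = ∑ i, d i := by
  rw [Matrix.trace_mul_cycle, hU2, Matrix.one_mul, Matrix.trace_diagonal]

lemma exists_sign_unitary {Δ : Matrix (Fin n) (Fin n) ℂ} (hΔ : Δ.IsHermitian) :
    ∃ W : Matrix (Fin n) (Fin n) ℂ, W.IsHermitian ∧ W * W = 1 ∧
      Δ * W = (Matrix.posSemidef_conjTranspose_mul_self Δ).sqrt := by
  set U : Matrix (Fin n) (Fin n) ℂ := (hΔ.eigenvectorUnitary : Matrix (Fin n) (Fin n) ℂ) with hUdef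
  have hU1 : U * star U = 1 := (Matrix.mem_unitaryGroup_iff).mp hΔ.eigenvectorUnitary.2
  have hU2 : star U * U = 1 := (Matrix.mem_unitaryGroup_iff').mp hΔ.eigenvectorUnitary.2
  set e := hΔ.eigenvalues with hedef
  set w : Fin n → ℂ := fun i => if e i < 0 then -1 else 1 with hwdef
  have hwstar : star w = w := by
    funext i
    simp only [Pi.star_apply, hwdef]
    split <;> simp
  refine ⟨U * diagonal w * star U, ?_, ?_, ?_⟩
  · show (U * diagonal w * star U)ᴴ = U * diagonal w * star U
    rw [Matrix.conjTranspose_mul, Matrix.conjTranspose_mul, Matrix.diagonal_conjTranspose, hwstar,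
      Matrix.star_eq_conjTranspose U, Matrix.conjTranspose_conjTranspose, ← Matrix.mul_assoc]
  · rw [unitary_conj_mul U hU2]
    have : (fun i => w i * w i) = fun _ => (1 : ℂ) := by
      funext i; simp only [hwdef]; split <;> norm_num
    rw [this, Matrix.diagonal_one, Matrix.mul_one, hU1]
  · have hspec : Δ = U * diagonal (RCLike.ofReal ∘ e) * star U := hΔ.spectral_theorem
    have hmul : Δ * (U * diagonal w * star U)
        = U * diagonal (RCLike.ofReal ∘ fun i => |e i|) * star U := by
      have hd : (fun i => (RCLike.ofReal ∘ e) i * w i)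
          = (RCLike.ofReal ∘ fun i => |e i| : Fin n → ℂ) := by
        funext i
        simp only [Function.comp_apply, hwdef]
        by_cases h : e i < 0
        · rw [if_pos h, abs_of_neg h, RCLike.ofReal_neg]; ring
        · rw [if_neg h, abs_of_nonneg (not_lt.mp h)]; ring
      conv_lhs => rw [hspec]
      rw [unitary_conj_mul U hU2, hd]
    rw [hmul]
    have hS : (U * diagonal (RCLike.ofReal ∘ fun i => |e i|) * star U).PosSemidef := by
      rw [Matrix.star_eq_conjTranspose]
      exact (Matrix.posSemidef_diagonal_iff.mpr fun i =>
        RCLike.ofReal_nonneg.mpr (abs_nonneg _)).mul_mul_conjTranspose_same U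
    refine hS.eq_sqrt_of_sq_eq (Matrix.posSemidef_conjTranspose_mul_self Δ) ?_
    have hd2 : (fun i => (RCLike.ofReal ∘ fun i => |e i| : Fin n → ℂ) i
          * (RCLike.ofReal ∘ fun i => |e i| : Fin n → ℂ) i)
        = (fun i => (RCLike.ofReal ∘ e) i * (RCLike.ofReal ∘ e) i) := by
      funext i
      simp only [Function.comp_apply]
      rw [← RCLike.ofReal_mul, ← RCLike.ofReal_mul, abs_mul_abs_self]
    rw [pow_two, unitary_conj_mul U hU2, hd2, hΔ.eq]
    conv_rhs => rw [hspec]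
    rw [unitary_conj_mul U hU2]

lemma trace_proj (P : Matrix (Fin n) (Fin n) ℂ) (hP : P.IsHermitian)
    (hProj : P * P = P) : P.trace = (P.rank : ℂ) := by
  classical
  set U : Matrix (Fin n) (Fin n) ℂ := (hP.eigenvectorUnitary : Matrix (Fin n) (Fin n) ℂ)
  have hU2 : star U * U = 1 := (Matrix.mem_unitaryGroup_iff').mp hP.eigenvectorUnitary.2
  set e := hP.eigenvalues with hedef
  have hspec : P = U * diagonal (RCLike.ofReal ∘ e) * star U := hP.spectral_theorem
  have hsq : ∀ i, e i * e i = e i := by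
    intro i
    have h1 : U * diagonal (fun i => (RCLike.ofReal ∘ e) i * (RCLike.ofReal ∘ e) i) * star U
        = U * diagonal (RCLike.ofReal ∘ e) * star U := by
      rw [← unitary_conj_mul U hU2, ← hspec]; exact hProj
    have h2 := congrFun (congrFun (unitary_conj_inj U hU2 h1) i) i
    simp only [Matrix.diagonal_apply_eq, Function.comp_apply] at h2
    have h3 : (RCLike.ofReal (e i * e i) : ℂ) = RCLike.ofReal (e i) := by
      rw [RCLike.ofReal_mul]; exact h2
    exact RCLike.ofReal_injective h3
  have h01 : ∀ i, e i = 0 ∨ e i = 1 := by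
    intro i
    have : e i * (e i - 1) = 0 := by rw [mul_sub, hsq i, mul_one, sub_self]
    rcases mul_eq_zero.mp this with h | h
    · exact Or.inl h
    · exact Or.inr (by linarith)
  have htr : P.trace = ∑ i, (RCLike.ofReal (e i) : ℂ) := by
    conv_lhs => rw [hspec]
    rw [trace_unitary_conj U hU2]
    rfl
  rw [htr, hP.rank_eq_card_non_zero_eigs, Fintype.card_subtype]
  calc (∑ i, (RCLike.ofReal (e i) : ℂ))
      = ∑ i, (if e i ≠ 0 then (1 : ℂ) else 0) := by
        refine Finset.sum_congr rfl fun i _ => ?_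
        rcases h01 i with h | h <;> simp [h]
    _ = ((Finset.univ.filter fun i => e i ≠ 0).card : ℂ) := by
        rw [← Finset.sum_filter, Finset.sum_const, nsmul_eq_mul, mul_one]
    _ = _ := by norm_cast

lemma gentle {ρ P W : Matrix (Fin n) (Fin n) ℂ} {c : ℝ}
    (hρ : ρ.PosSemidef) (hρtr : ρ.trace = 1)
    (hPH : P.IsHermitian) (hProj : P * P = P)
    (hWH : W.IsHermitian) (hWW : W * W = 1)
    (hc : 0 ≤ c) (htr : 1 - c ^ 2 ≤ (ρ * P).trace.re)
    (habs : ∀ X Y : Matrix (Fin n) (Fin n) ℂ, |((X * Y).trace).re| ≤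
      Real.sqrt ((Xᴴ * X).trace.re) * Real.sqrt ((Yᴴ * Y).trace.re)) :
    |(((ρ - P * ρ * P) * W).trace).re| ≤ 2 * c := by
  classical
  set Q : Matrix (Fin n) (Fin n) ℂ := 1 - P with hQdef
  have hQH : Qᴴ = Q := by
    rw [hQdef, Matrix.conjTranspose_sub, Matrix.conjTranspose_one, hPH.eq]
  have hQQ : Q * Q = Q := by
    rw [hQdef, sub_mul, one_mul, mul_sub, mul_one, hProj]; abel
  set s := hρ.sqrt with hsdef
  have hs : s * s = ρ := hρ.sqrt_mul_self
  have hsH : sᴴ = s := hρ.posSemidef_sqrt.1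
  -- the split
  have hsplit : (ρ - P * ρ * P) * W = (Q * s) * (s * W) + (P * s) * (s * (Q * W)) := by
    have e1 : (Q * s) * (s * W) = Q * (ρ * W) := by
      rw [Matrix.mul_assoc, ← Matrix.mul_assoc s s W, hs]
    have e2 : (P * s) * (s * (Q * W)) = P * (ρ * (Q * W)) := by
      rw [Matrix.mul_assoc, ← Matrix.mul_assoc s s (Q * W), hs]
    rw [e1, e2, hQdef]
    noncomm_ring
  -- traces of the pieces
  have hρQ_eq : ((Q * s)ᴴ * (Q * s)).trace = (ρ * Q).trace := by
    rw [Matrix.conjTranspose_mul, hsH, hQH]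
    have : (s * Q) * (Q * s) = s * (Q * s) := by
      rw [Matrix.mul_assoc, ← Matrix.mul_assoc Q Q s, hQQ]
    rw [this, Matrix.trace_mul_comm, Matrix.mul_assoc, hs, Matrix.trace_mul_comm]
  have hρP_eq : ((P * s)ᴴ * (P * s)).trace = (ρ * P).trace := by
    rw [Matrix.conjTranspose_mul, hsH, hPH.eq]
    have : (s * P) * (P * s) = s * (P * s) := by
      rw [Matrix.mul_assoc, ← Matrix.mul_assoc P P s, hProj]
    rw [this, Matrix.trace_mul_comm, Matrix.mul_assoc, hs, Matrix.trace_mul_comm]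
  have hsW_eq : ((s * W)ᴴ * (s * W)).trace = 1 := by
    rw [Matrix.conjTranspose_mul, hsH, hWH.eq]
    have : (W * s) * (s * W) = W * (ρ * W) := by
      rw [Matrix.mul_assoc, ← Matrix.mul_assoc s s W, hs]
    rw [this, Matrix.trace_mul_comm, Matrix.mul_assoc, hWW, Matrix.mul_one, hρtr]
  have hsQW_eq : ((s * (Q * W))ᴴ * (s * (Q * W))).trace = (ρ * Q).trace := by
    rw [Matrix.conjTranspose_mul, hsH, Matrix.conjTranspose_mul, hQH, hWH.eq]
    have e : (W * Q * s) * (s * (Q * W)) = (W * Q) * (ρ * (Q * W)) := by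
      rw [Matrix.mul_assoc (W*Q) s _, ← Matrix.mul_assoc s s (Q*W), hs]
    rw [e, Matrix.trace_mul_comm]
    have e2 : ρ * (Q * W) * (W * Q) = ρ * Q := by
      rw [Matrix.mul_assoc, Matrix.mul_assoc Q W (W*Q), ← Matrix.mul_assoc W W Q, hWW,
        Matrix.one_mul, hQQ]
    rw [e2]
  -- numeric bounds
  have hρQ_nonneg : 0 ≤ (ρ * Q).trace.re := by
    rw [← hρQ_eq]
    exact trace_re_nonneg (Matrix.posSemidef_conjTranspose_mul_self _)
  have hρQP : (ρ * Q).trace = ρ.trace - (ρ * P).trace := by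
    rw [hQdef, Matrix.mul_sub, Matrix.mul_one, Matrix.trace_sub]
  have hρQ_le : (ρ * Q).trace.re ≤ c ^ 2 := by
    rw [hρQP, Complex.sub_re, hρtr]
    have : (1 : ℂ).re = 1 := by simp
    rw [this]
    linarith
  have hρP_le : (ρ * P).trace.re ≤ 1 := by
    have := hρQ_nonneg
    rw [hρQP, Complex.sub_re, hρtr] at this
    simp only [Complex.one_re] at this
    linarith
  have hρP_nonneg : 0 ≤ (ρ * P).trace.re := by
    rw [← hρP_eq]
    exact trace_re_nonneg (Matrix.posSemidef_conjTranspose_mul_self _)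
  -- combine
  have t1 : |(((Q * s) * (s * W)).trace).re| ≤ c := by
    calc |(((Q * s) * (s * W)).trace).re|
        ≤ Real.sqrt (((Q * s)ᴴ * (Q * s)).trace.re) *
          Real.sqrt (((s * W)ᴴ * (s * W)).trace.re) := habs _ _
      _ ≤ Real.sqrt (c ^ 2) * Real.sqrt 1 := by
          gcongr
          · rw [hρQ_eq]; exact hρQ_le
          · rw [hsW_eq]; simp
      _ = c := by rw [Real.sqrt_sq hc, Real.sqrt_one, mul_one]
  have t2 : |(((P * s) * (s * (Q * W))).trace).re| ≤ c := by
    calc |(((P * s) * (s * (Q * W))).trace).re|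
        ≤ Real.sqrt (((P * s)ᴴ * (P * s)).trace.re) *
          Real.sqrt (((s * (Q * W))ᴴ * (s * (Q * W))).trace.re) := habs _ _
      _ ≤ Real.sqrt 1 * Real.sqrt (c ^ 2) := by
          gcongr
          · rw [hρP_eq]; exact hρP_le
          · rw [hsQW_eq]; exact hρQ_le
      _ = c := by rw [Real.sqrt_sq hc, Real.sqrt_one, one_mul]
  rw [hsplit, Matrix.trace_add, Complex.add_re]
  calc |((Q * s) * (s * W)).trace.re + ((P * s) * (s * (Q * W))).trace.re|
      ≤ |((Q * s) * (s * W)).trace.re| + |((P * s) * (s * (Q * W))).trace.re| := abs_add_le _ _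
    _ ≤ c + c := add_le_add t1 t2
    _ = 2 * c := by ring

end Helpers

/-- If `‖ρ₀−ρ₁‖₁ ≥ t = 4c + r` and `P` is a rank-`D` projection with
`tr(ρᵢP) ≥ 1 − c²`, then `‖ρ₀−ρ₁‖₂² ≥ r²/D`. -/
theorem frobenius_lower_bound {n D : ℕ} (ρ₀ ρ₁ P : Matrix (Fin n) (Fin n) ℂ)
    (h₀ : IsDensityMatrix ρ₀) (h₁ : IsDensityMatrix ρ₁)
    (hP : P.IsHermitian) (hProj : P * P = P) (hrank : P.rank = D)
    (t c r : ℝ) (hc : 0 ≤ c) (hr : 0 < r) (ht : t = 4 * c + r)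
    (htrace : traceNorm (ρ₀ - ρ₁) ≥ t)
    (h0P : (ρ₀ * P).trace.re ≥ 1 - c ^ 2) (h1P : (ρ₁ * P).trace.re ≥ 1 - c ^ 2) :
    ((ρ₀ - ρ₁)ᴴ * (ρ₀ - ρ₁)).trace.re ≥ r ^ 2 / D := by
  classical
  set Δ : Matrix (Fin n) (Fin n) ℂ := ρ₀ - ρ₁ with hΔdef
  have hΔH : Δ.IsHermitian := h₀.1.1.sub h₁.1.1
  obtain ⟨W, hWH, hWW, hΔW⟩ := exists_sign_unitary hΔH
  -- trace norm as an honest trace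
  have htn : traceNorm Δ = ((Δ * W).trace).re := by
    rw [traceNorm, ← hΔW]
  -- gentle measurement bounds
  have g0 : |(((ρ₀ - P * ρ₀ * P) * W).trace).re| ≤ 2 * c :=
    gentle h₀.1 h₀.2 hP hProj hWH hWW hc h0P abs_trace_mul_re_le
  have g1 : |(((ρ₁ - P * ρ₁ * P) * W).trace).re| ≤ 2 * c :=
    gentle h₁.1 h₁.2 hP hProj hWH hWW hc h1P abs_trace_mul_re_le
  -- split Δ * W
  have hsplit : Δ * W = (P * Δ * P) * W + (ρ₀ - P * ρ₀ * P) * W - (ρ₁ - P * ρ₁ * P) * W := by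
    rw [hΔdef]; noncomm_ring
  have hmain : r ≤ ((P * Δ * P * W).trace).re := by
    have hT : ((Δ * W).trace).re = ((P * Δ * P * W).trace).re
        + (((ρ₀ - P * ρ₀ * P) * W).trace).re - (((ρ₁ - P * ρ₁ * P) * W).trace).re := by
      rw [hsplit, Matrix.trace_sub, Matrix.trace_add, Complex.sub_re, Complex.add_re]
    have h1 : t ≤ ((Δ * W).trace).re := by rw [← htn]; exact htrace
    have h2 := abs_le.mp g0
    have h3 := abs_le.mp g1
    rw [hT] at h1
    rw [ht] at h1
    linarith [h2.1, h2.2, h3.1, h3.2]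
  -- move to trace against P * W * P
  have hcyc : (P * Δ * P * W).trace = (Δ * (P * W * P)).trace := by
    calc (P * Δ * P * W).trace = (P * Δ * (P * W)).trace := by rw [Matrix.mul_assoc]
      _ = ((P * W) * (P * Δ)).trace := Matrix.trace_mul_comm _ _
      _ = ((P * W) * P * Δ).trace := by simp only [← Matrix.mul_assoc]
      _ = (Δ * (P * W * P)).trace := Matrix.trace_mul_comm _ _
  -- bound tr((PWP)ᴴ(PWP)) by D
  set M : Matrix (Fin n) (Fin n) ℂ := P * W * P with hMdef
  have hPP : ∀ X : Matrix (Fin n) (Fin n) ℂ, P * (P * X) = P * X := fun X => by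
    rw [← Matrix.mul_assoc, hProj]
  have hWWX : ∀ X : Matrix (Fin n) (Fin n) ℂ, W * (W * X) = X := fun X => by
    rw [← Matrix.mul_assoc, hWW, Matrix.one_mul]
  have hQpsd : (1 - P : Matrix (Fin n) (Fin n) ℂ).PosSemidef := by
    convert posSemidef_conjTranspose_mul_self (1 - P) using 1
    rw [Matrix.conjTranspose_sub, Matrix.conjTranspose_one, hP.eq, sub_mul, one_mul, mul_sub,
      mul_one, hProj]
    abel
  have hkey : Pᴴ * (Wᴴ * (1 - P) * W) * P = P - Mᴴ * M := by
    have hMH : Mᴴ = M := by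
      rw [hMdef, Matrix.conjTranspose_mul, Matrix.conjTranspose_mul, hP.eq, hWH.eq,
        Matrix.mul_assoc]
    rw [hMH, hMdef, hP.eq, hWH.eq]
    simp only [Matrix.mul_sub, Matrix.sub_mul, Matrix.mul_one, Matrix.one_mul,
      Matrix.mul_assoc, hPP, hWWX, hProj]
  have hMpsd : (Pᴴ * (Wᴴ * (1 - P) * W) * P).PosSemidef :=
    (hQpsd.conjTranspose_mul_mul_same W).conjTranspose_mul_mul_same P
  have hMbound : ((Mᴴ * M).trace).re ≤ (D : ℝ) := by
    have h1 : 0 ≤ ((P - Mᴴ * M).trace).re := by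
      rw [← hkey]; exact trace_re_nonneg hMpsd
    have h2 : P.trace = (D : ℂ) := by rw [trace_proj P hP hProj, hrank]
    rw [Matrix.trace_sub, Complex.sub_re, h2] at h1
    simp only [Complex.natCast_re] at h1
    linarith
  -- Cauchy-Schwarz finish
  set G : ℝ := ((Δᴴ * Δ).trace).re with hGdef
  have hG_nonneg : 0 ≤ G := trace_re_nonneg (Matrix.posSemidef_conjTranspose_mul_self Δ)
  have hfinal : r ≤ Real.sqrt G * Real.sqrt D := by
    calc r ≤ ((Δ * M).trace).re := by rw [← hcyc]; exact hmain
      _ ≤ |((Δ * M).trace).re| := le_abs_self _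
      _ ≤ Real.sqrt G * Real.sqrt (((Mᴴ * M).trace).re) := abs_trace_mul_re_le Δ M
      _ ≤ Real.sqrt G * Real.sqrt D := by gcongr
  have hD_pos : 0 < (D : ℝ) := by
    by_contra h
    push_neg at h
    have : (D : ℝ) = 0 := le_antisymm h (Nat.cast_nonneg _)
    rw [this, Real.sqrt_zero, mul_zero] at hfinal
    linarith
  have hsq : r ^ 2 ≤ G * D := by
    have : r ≤ Real.sqrt (G * D) := by rw [Real.sqrt_mul hG_nonneg]; exact hfinal
    calc r ^ 2 ≤ Real.sqrt (G * D) ^ 2 := by gcongr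
      _ = G * D := Real.sq_sqrt (mul_nonneg hG_nonneg (Nat.cast_nonneg _))
  rw [ge_iff_le, div_le_iff₀ hD_pos]
  exact hsq
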